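/- Let X be a Tychonoff space. The function Θ defined on the set E(X) of (equivalence classes of) one-point Tychonoff extensions of X by Θ(Y) = τ_Y⁻¹(Y\X) is an anti-order-isomorphism from (E(X), ≤) onto the set of all nonempty compact subsets of βX\X partially ordered by inclusion. In particular, Θ is a bijection onto the nonempty compact subsets of βX\X, and for Y₁, Y₂ ∈ E(X) one has Y₁ ≤ Y₂ if and only if Θ(Y₂) ⊆ Θ(Y₁). -/

import Mathlib

open Set Topology Filter

universe u

/-- A one-point Tychonoff extension of `X`: a Tychonoff space containing (a homeomorphic copy
of) `X` as a dense subspace whose complement is a single point `pt`. -/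
structure OnePointExt (X : Type u) [TopologicalSpace X] : Type (u + 1) where
  carrier : Type u
  top : TopologicalSpace carrier
  t35 : @T35Space carrier top
  ι : X → carrier
  emb : @Topology.IsEmbedding X carrier _ top ι
  pt : carrier
  range_eq : Set.range ι = {pt}ᶜ
  dense : @DenseRange carrier top X ι

attribute [instance] OnePointExt.top OnePointExt.t35

variable {X : Type u} [TopologicalSpace X]

/-- The partial order on one-point extensions: `Y₁ ≤ Y₂` iff there is a continuous map from
`Y₂` into `Y₁` fixing `X` pointwise. -/
def OnePointExt.le (Y1 Y2 : OnePointExt X) : Prop :=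
  ∃ f : Y2.carrier → Y1.carrier, Continuous f ∧ ∀ x, f (Y2.ι x) = Y1.ι x

/-- Equivalence of extensions: a homeomorphism fixing `X` pointwise. -/
def OnePointExt.equiv (Y1 Y2 : OnePointExt X) : Prop :=
  ∃ h : Y1.carrier ≃ₜ Y2.carrier, ∀ x, h (Y1.ι x) = Y2.ι x

/-- `τ_Y : βX → βY`, the unique continuous extension of `id_X`. -/
noncomputable def OnePointExt.tau (Y : OnePointExt X) : StoneCech X → StoneCech Y.carrier :=
  stoneCechExtend (continuous_stoneCechUnit.comp Y.emb.continuous)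

/-- `Θ_X(Y) = τ_Y⁻¹(Y \ X)`, a subset of `βX`. -/
noncomputable def OnePointExt.theta (Y : OnePointExt X) : Set (StoneCech X) :=
  Y.tau ⁻¹' {stoneCechUnit Y.pt}

/-- A zero-set: `f⁻¹(0)` for a continuous `f : Z → [0,1]`. -/
def IsZeroSet {Z : Type u} [TopologicalSpace Z] (A : Set Z) : Prop :=
  ∃ f : Z → unitInterval, Continuous f ∧ A = f ⁻¹' {0}

/-- A cozero-set: a complement of a zero-set. -/
def IsCozeroSet {Z : Type u} [TopologicalSpace Z] (A : Set Z) : Prop :=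
  ∃ f : Z → unitInterval, Continuous f ∧ A = (f ⁻¹' {0})ᶜ

/-- `λ_P X = ⋃ { int_{βX} cl_{βX} C : C a cozero-set of X whose closure in X has P }`. -/
def lambdaP (P : (Z : Type u) → [TopologicalSpace Z] → Prop) (X : Type u)
    [TopologicalSpace X] : Set (StoneCech X) :=
  ⋃ C ∈ {C : Set X | IsCozeroSet C ∧ P (closure C)},
    interior (closure (stoneCechUnit '' C))

/-- A pseudocompact space: every continuous real-valued function is bounded. -/
def Pseudocompact (Z : Type u) [TopologicalSpace Z] : Prop :=
  ∀ f : Z → ℝ, Continuous f → ∃ M, ∀ z, |f z| ≤ M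

/-- `P` is a topological property: it is invariant under homeomorphisms. -/
def TopProperty (P : (Z : Type u) → [TopologicalSpace Z] → Prop) : Prop :=
  ∀ (Z W : Type u) [TopologicalSpace Z] [TopologicalSpace W], Z ≃ₜ W → P Z → P W

/-- `P` is closed hereditary: closed subspaces of a space with `P` have `P`. -/
def ClosedHereditary (P : (Z : Type u) → [TopologicalSpace Z] → Prop) : Prop :=
  ∀ (Z : Type u) [TopologicalSpace Z], P Z → ∀ F : Set Z, IsClosed F → P F

/-- `P` is preserved under finite closed sums of subspaces. -/
def FiniteClosedSums (P : (Z : Type u) → [TopologicalSpace Z] → Prop) : Prop :=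
  ∀ (Z : Type u) [TopologicalSpace Z] [T2Space Z] (n : ℕ) (F : Fin n → Set Z),
    (∀ i, IsClosed (F i)) → (∀ i, P (F i)) → (⋃ i, F i) = univ → P Z

/-- `P` is preserved under locally finite closed sums of subspaces. -/
def LocallyFiniteClosedSums (P : (Z : Type u) → [TopologicalSpace Z] → Prop) : Prop :=
  ∀ (Z : Type u) [TopologicalSpace Z] [T2Space Z] (ι : Type u) (F : ι → Set Z),
    LocallyFinite F → (∀ i, IsClosed (F i)) → (∀ i, P (F i)) → (⋃ i, F i) = univ → P Z

/-- `P` is preserved under countable closed sums of subspaces. -/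
def CountableClosedSums (P : (Z : Type u) → [TopologicalSpace Z] → Prop) : Prop :=
  ∀ (Z : Type u) [TopologicalSpace Z] [T2Space Z] (F : ℕ → Set Z),
    (∀ i, IsClosed (F i)) → (∀ i, P (F i)) → (⋃ i, F i) = univ → P Z

/-- Mrówka's condition (W): if a Tychonoff space `T` has a point `p` with an open base `B` at
`p` such that `T \ b` has `P` for each `b ∈ B`, then `T` has `P`. -/
def MrowkaW (P : (Z : Type u) → [TopologicalSpace Z] → Prop) : Prop :=
  ∀ (T : Type u) [TopologicalSpace T] [T35Space T] (p : T) (B : Set (Set T)),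
    (∀ b ∈ B, IsOpen b ∧ p ∈ b) →
    (∀ V : Set T, IsOpen V → p ∈ V → ∃ b ∈ B, b ⊆ V) →
    (∀ b ∈ B, P (↥(bᶜ))) → P T

/-- `X` is locally-P: every point has an open neighborhood whose closure has `P`. -/
def LocallyP (P : (Z : Type u) → [TopologicalSpace Z] → Prop)
    (X : Type u) [TopologicalSpace X] : Prop :=
  ∀ x : X, ∃ U : Set X, IsOpen U ∧ x ∈ U ∧ P (closure U)

/-- `P` coincides with pseudocompactness. -/
def IsPseudocompactness (P : (Z : Type u) → [TopologicalSpace Z] → Prop) : Prop :=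
  ∀ (Z : Type u) [TopologicalSpace Z], P Z ↔ Pseudocompact Z

/-- A `P`-far one-point extension: for every zero-set `Z` of `X` contained in a cozero-set `C`
of `X` whose closure has `P`, the closure of `Z` in the extension misses the remainder. -/
def OnePointExt.PFar (P : (Z : Type u) → [TopologicalSpace Z] → Prop)
    (Y : OnePointExt X) : Prop :=
  ∀ Z C : Set X, IsZeroSet Z → IsCozeroSet C → P (closure C) → Z ⊆ C →
    Y.pt ∉ closure (Y.ι '' Z)

/-- Čech-complete: `Z` is a Gδ-set in `βZ`. -/
def CechComplete (Z : Type u) [TopologicalSpace Z] : Prop :=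
  IsGδ (Set.range (stoneCechUnit : Z → StoneCech Z))

/-- The extension is first countable at the added point. -/
def OnePointExt.FirstCountableAtPt (Y : OnePointExt X) : Prop :=
  (𝓝 Y.pt).IsCountablyGenerated

/-- Strong zero-dimensionality: `βX` has an open base of clopen sets. -/
def StronglyZeroDimensional (X : Type u) [TopologicalSpace X] : Prop :=
  ∀ U : Set (StoneCech X), IsOpen U → ∀ x ∈ U,
    ∃ V : Set (StoneCech X), IsClopen V ∧ x ∈ V ∧ V ⊆ U

/-- `Δ` is an order-isomorphism from the subset `A` of one-point extensions of `X` (with the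
order `≤`) onto the subset `B` of one-point extensions of `Y`, where extensions are regarded
up to the equivalence `OnePointExt.equiv`: `Δ` maps `A` into `B`, reflects and preserves `≤`
on `A`, and every member of `B` is equivalent to the image of a member of `A`. -/
def RestrictedOrderIso {X Y : Type u} [TopologicalSpace X] [TopologicalSpace Y]
    (A : Set (OnePointExt X)) (B : Set (OnePointExt Y))
    (Δ : OnePointExt X → OnePointExt Y) : Prop :=
  (∀ T ∈ A, Δ T ∈ B) ∧
  (∀ T1 ∈ A, ∀ T2 ∈ A, (T1.le T2 ↔ (Δ T1).le (Δ T2))) ∧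
  (∀ S ∈ B, ∃ T ∈ A, (Δ T).equiv S)

section Aux

set_option linter.unusedSectionVars false

theorem aux_extend_unit {A : Type*} {B : Type*} [TopologicalSpace A] [TopologicalSpace B] [T2Space B]
    [CompactSpace B] {g : A → B} (hg : Continuous g) (a : A) :
    stoneCechExtend hg (stoneCechUnit a) = g a :=
  congrFun (stoneCechExtend_extends hg) a

/-- `stoneCechUnit` is an embedding for T3.5 spaces. -/
theorem aux_isEmbedding_stoneCechUnit {Z : Type u} [TopologicalSpace Z] [T35Space Z] :
    Topology.IsEmbedding (stoneCechUnit : Z → StoneCech Z) := by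
  refine ⟨isInducing_iff_nhds.2 fun z => le_antisymm
    (tendsto_iff_comap.mp continuous_stoneCechUnit.continuousAt) ?_,
    injective_stoneCechUnit_of_t35Space⟩
  intro U hU
  obtain ⟨U', hU'U, hU'o, hzU'⟩ := mem_nhds_iff.1 hU
  obtain ⟨f, hf, hfz, hf1⟩ :=
    CompletelyRegularSpace.completely_regular z U'ᶜ hU'o.isClosed_compl (by simp [hzU'])
  refine mem_comap.2 ⟨stoneCechExtend hf ⁻¹' ({1}ᶜ), ?_, ?_⟩
  · refine IsOpen.mem_nhds (isClosed_singleton.isOpen_compl.preimage (continuous_stoneCechExtend hf)) ?_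
    have : stoneCechExtend hf (stoneCechUnit z) = f z := aux_extend_unit hf z
    simp only [mem_compl_iff, mem_preimage, mem_singleton_iff, this, hfz]
    exact zero_ne_one
  · intro x hx
    simp only [mem_preimage, mem_compl_iff, mem_singleton_iff] at hx
    rw [aux_extend_unit hf x] at hx
    by_contra hxU
    exact hx (by have := hf1 (show x ∈ U'ᶜ from fun h => hxU (hU'U h)); simpa using this)

/-- The key fiber lemma: if `u : Z → B` is a dense embedding, `v : Z → K` an embedding,
and `g : B → K` continuous with `g ∘ u = v`, then the fiber of `g` over `v z` is `{u z}`. -/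
theorem aux_fiber {B Z K : Type u} [TopologicalSpace B] [TopologicalSpace Z] [TopologicalSpace K]
    [T2Space B]
    {u : Z → B} (hu : Topology.IsEmbedding u) (hud : DenseRange u)
    {v : Z → K} (hv : Topology.IsEmbedding v)
    {g : B → K} (hg : Continuous g) (hgu : ∀ z, g (u z) = v z)
    {p : B} {z : Z} (hp : g p = v z) : p = u z := by
  by_contra hne
  obtain ⟨U, V, hUo, hVo, hpU, hzV, hUV⟩ := t2_separation hne
  have h1 : p ∈ closure (U ∩ range u) := hud.open_subset_closure_inter hUo hpU
  have h2 : U ∩ range u = u '' (u ⁻¹' U) := by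
    rw [Set.image_preimage_eq_inter_range, Set.inter_comm]
  rw [h2] at h1
  have h3 : g p ∈ closure (v '' (u ⁻¹' U)) := by
    refine map_mem_closure hg h1 ?_
    rintro _ ⟨y, hy, rfl⟩
    exact ⟨y, hy, (hgu y).symm⟩
  rw [hp] at h3
  have h4 : z ∈ closure (u ⁻¹' U) := by
    rw [hv.closure_eq_preimage_closure_image]; exact h3
  obtain ⟨y, hyV, hyU⟩ := mem_closure_iff.1 h4 (u ⁻¹' V) (hVo.preimage hu.continuous) hzV
  exact (Set.disjoint_iff.1 hUV) ⟨hyU, hyV⟩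

namespace OnePointExt

variable [T35Space X] (Y : OnePointExt X)

theorem tau_unit (x : X) : Y.tau (stoneCechUnit x) = stoneCechUnit (Y.ι x) :=
  congrFun (stoneCechExtend_extends _) x

theorem continuous_tau : Continuous Y.tau := continuous_stoneCechExtend _

theorem denseRange_unit_iota : DenseRange (fun x => stoneCechUnit (Y.ι x) : X → StoneCech Y.carrier) :=
  denseRange_stoneCechUnit.comp Y.dense continuous_stoneCechUnit

theorem isEmbedding_unit_iota :
    Topology.IsEmbedding (fun x => stoneCechUnit (Y.ι x) : X → StoneCech Y.carrier) :=
  aux_isEmbedding_stoneCechUnit.comp Y.emb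

theorem tau_surjective : Function.Surjective Y.tau := by
  have hclosed : IsClosed (range Y.tau) :=
    (isCompact_range Y.continuous_tau).isClosed
  have hsub : range (fun x => stoneCechUnit (Y.ι x) : X → StoneCech Y.carrier) ⊆ range Y.tau := by
    rintro _ ⟨x, rfl⟩; exact ⟨stoneCechUnit x, Y.tau_unit x⟩
  intro w
  have : w ∈ closure (range (fun x => stoneCechUnit (Y.ι x) : X → StoneCech Y.carrier)) :=
    Y.denseRange_unit_iota w
  have := closure_mono hsub this
  rwa [hclosed.closure_eq] at this

theorem fiberX {p : StoneCech X} {x : X} (hp : Y.tau p = stoneCechUnit (Y.ι x)) :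
    p = stoneCechUnit x :=
  aux_fiber aux_isEmbedding_stoneCechUnit denseRange_stoneCechUnit
    Y.isEmbedding_unit_iota Y.continuous_tau (fun z => Y.tau_unit z) hp

theorem theta_not_unit {p : StoneCech X} (hp : p ∈ Y.theta) :
    p ∉ range (stoneCechUnit : X → StoneCech X) := by
  rintro ⟨x, rfl⟩
  have h1 : Y.tau (stoneCechUnit x) = stoneCechUnit Y.pt := hp
  rw [Y.tau_unit x] at h1
  have h2 : Y.ι x = Y.pt := injective_stoneCechUnit_of_t35Space h1
  have : Y.ι x ∈ range Y.ι := ⟨x, rfl⟩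
  rw [Y.range_eq] at this
  exact this h2

theorem isCompact_theta : IsCompact Y.theta :=
  (isClosed_singleton.preimage Y.continuous_tau).isCompact

theorem nonempty_theta : Y.theta.Nonempty := by
  obtain ⟨p, hp⟩ := Y.tau_surjective (stoneCechUnit Y.pt)
  exact ⟨p, hp⟩

theorem nonemptyX (Y' : OnePointExt X) : Nonempty X := by
  haveI : Nonempty Y'.carrier := ⟨Y'.pt⟩
  exact Y'.dense.nonempty

/-- Forward direction of the order anti-isomorphism. -/
theorem le_imp_theta_subset {Y1 Y2 : OnePointExt X} (h : Y1.le Y2) : Y2.theta ⊆ Y1.theta := by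
  obtain ⟨f, hf, hfx⟩ := h
  have hc : Continuous (fun y => stoneCechUnit (f y) : Y2.carrier → StoneCech Y1.carrier) :=
    continuous_stoneCechUnit.comp hf
  have hcomm : stoneCechExtend hc ∘ Y2.tau = Y1.tau := by
    refine stoneCech_hom_ext ((continuous_stoneCechExtend hc).comp Y2.continuous_tau)
      Y1.continuous_tau (funext fun x => ?_)
    show stoneCechExtend hc (Y2.tau (stoneCechUnit x)) = Y1.tau (stoneCechUnit x)
    rw [Y2.tau_unit x, Y1.tau_unit x, aux_extend_unit hc (Y2.ι x), hfx]
  intro p hp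
  have h1 : Y2.tau p = stoneCechUnit Y2.pt := hp
  have h2 : Y1.tau p = stoneCechUnit (f Y2.pt) := by
    rw [← hcomm, Function.comp_apply, h1, aux_extend_unit hc Y2.pt]
  by_cases hfp : f Y2.pt = Y1.pt
  · show Y1.tau p = stoneCechUnit Y1.pt
    rw [h2, hfp]
  · have : f Y2.pt ∈ range Y1.ι := by rw [Y1.range_eq]; exact hfp
    obtain ⟨x, hx⟩ := this
    rw [← hx] at h2
    have := Y1.fiberX h2
    exact absurd ⟨x, this.symm⟩ (Y2.theta_not_unit hp)

/-- Backward direction of the order anti-isomorphism. -/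
theorem theta_subset_imp_le {Y1 Y2 : OnePointExt X} (h : Y2.theta ⊆ Y1.theta) : Y1.le Y2 := by
  haveI : Nonempty X := Y1.nonemptyX
  classical
  set f : Y2.carrier → Y1.carrier :=
    fun y => if y = Y2.pt then Y1.pt else Y1.ι (Function.invFun Y2.ι y) with hfdef
  have hiotane : ∀ x : X, Y2.ι x ≠ Y2.pt := by
    intro x
    have : Y2.ι x ∈ range Y2.ι := ⟨x, rfl⟩
    rw [Y2.range_eq] at this; exact this
  have hfx : ∀ x, f (Y2.ι x) = Y1.ι x := by
    intro x
    simp only [hfdef, if_neg (hiotane x), Function.leftInverse_invFun Y2.emb.injective x]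
  refine ⟨f, ?_, hfx⟩
  rw [continuous_iff_continuousAt]
  intro y
  by_cases hy : y = Y2.pt
  · subst hy
    have hfpt : f Y2.pt = Y1.pt := by simp [hfdef]
    rw [ContinuousAt, hfpt, tendsto_nhds]
    intro V hVo hVpt
    set A : Set X := Y1.ι ⁻¹' Vᶜ with hA
    have hptA : Y2.pt ∉ closure (Y2.ι '' A) := by
      intro hmem
      have h1 : stoneCechUnit Y2.pt ∈
          closure ((stoneCechUnit : Y2.carrier → StoneCech Y2.carrier) '' (Y2.ι '' A)) := by
        rw [aux_isEmbedding_stoneCechUnit.closure_eq_preimage_closure_image (Y2.ι '' A)] at hmem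
        exact hmem
      have hcl : IsClosedMap Y2.tau := Y2.continuous_tau.isClosedMap
      have hF : IsClosed (Y2.tau '' closure ((stoneCechUnit : X → StoneCech X) '' A)) :=
        hcl _ isClosed_closure
      have h3 : closure ((stoneCechUnit : Y2.carrier → StoneCech Y2.carrier) '' (Y2.ι '' A)) ⊆
          Y2.tau '' closure ((stoneCechUnit : X → StoneCech X) '' A) := by
        refine closure_minimal ?_ hF
        rintro _ ⟨_, ⟨a, ha, rfl⟩, rfl⟩
        exact ⟨stoneCechUnit a, subset_closure ⟨a, ha, rfl⟩, Y2.tau_unit a⟩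
      obtain ⟨p, hpcl, hptau⟩ := h3 h1
      have hpθ : p ∈ Y1.theta := h hptau
      have h4 : Y1.tau p ∈
          closure ((stoneCechUnit : Y1.carrier → StoneCech Y1.carrier) '' (Y1.ι '' A)) := by
        refine map_mem_closure Y1.continuous_tau hpcl ?_
        rintro _ ⟨a, ha, rfl⟩
        exact ⟨Y1.ι a, ⟨a, ha, rfl⟩, (Y1.tau_unit a).symm⟩
      rw [show Y1.tau p = stoneCechUnit Y1.pt from hpθ] at h4
      have h5 : Y1.pt ∈ closure (Y1.ι '' A) := by
        rw [aux_isEmbedding_stoneCechUnit.closure_eq_preimage_closure_image (Y1.ι '' A)]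
        exact h4
      have h6 : closure (Y1.ι '' A) ⊆ Vᶜ := by
        refine closure_minimal ?_ hVo.isClosed_compl
        rintro _ ⟨a, ha, rfl⟩; exact ha
      exact h6 h5 hVpt
    refine Filter.mem_of_superset (isClosed_closure.isOpen_compl.mem_nhds hptA) ?_
    intro y' hy'
    by_cases hy'2 : y' = Y2.pt
    · simp only [mem_preimage, hy'2]
      simpa [hfdef] using hVpt
    · have hy'r : y' ∈ range Y2.ι := by rw [Y2.range_eq]; exact hy'2
      have hinv : Y2.ι (Function.invFun Y2.ι y') = y' := Function.invFun_eq hy'r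
      simp only [mem_preimage, hfdef, if_neg hy'2]
      by_contra hnV
      have hxA : Function.invFun Y2.ι y' ∈ A := hnV
      exact hy' (subset_closure ⟨Function.invFun Y2.ι y', hxA, hinv⟩)
  · have hopen : IsOpen ({Y2.pt}ᶜ : Set Y2.carrier) := isClosed_singleton.isOpen_compl
    refine ContinuousOn.continuousAt ?_ (hopen.mem_nhds hy)
    have hrange : ({Y2.pt}ᶜ : Set Y2.carrier) = range Y2.ι := Y2.range_eq.symm
    rw [hrange, continuousOn_iff_continuous_restrict]
    have hres : (range Y2.ι).domRestrict f =
        Y1.ι ∘ (fun z => (Topology.IsEmbedding.toHomeomorph Y2.emb).symm z) := by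
      funext z
      obtain ⟨x, hx⟩ := z.2
      have hz : z = (Topology.IsEmbedding.toHomeomorph Y2.emb) x := by
        ext; exact hx.symm
      have hsymm : (Topology.IsEmbedding.toHomeomorph Y2.emb).symm z = x := by
        rw [hz, Homeomorph.symm_apply_apply]
      show f z.1 = Y1.ι ((Topology.IsEmbedding.toHomeomorph Y2.emb).symm z)
      rw [hsymm, ← hx, hfx x]
    rw [hres]
    exact Y1.emb.continuous.comp (Topology.IsEmbedding.toHomeomorph Y2.emb).symm.continuous

/-- Equivalent extensions have the same theta. -/
theorem equiv_imp_theta_eq {Y1 Y2 : OnePointExt X} (h : Y1.equiv Y2) : Y1.theta = Y2.theta := by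
  obtain ⟨e, he⟩ := h
  have h12 : Y2.le Y1 := ⟨e, e.continuous, he⟩
  have h21 : Y1.le Y2 := ⟨e.symm, e.symm.continuous, fun x => by
    rw [← he x, Homeomorph.symm_apply_apply]⟩
  exact Subset.antisymm (le_imp_theta_subset h12) (le_imp_theta_subset h21)

/-- Extensions with equal theta are equivalent. -/
theorem theta_eq_imp_equiv {Y1 Y2 : OnePointExt X} (h : Y1.theta = Y2.theta) : Y1.equiv Y2 := by
  obtain ⟨f, hf, hfx⟩ := theta_subset_imp_le (Y1 := Y1) (Y2 := Y2) h.ge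
  obtain ⟨g, hg, hgx⟩ := theta_subset_imp_le (Y1 := Y2) (Y2 := Y1) h.le
  have hgf : f ∘ g = id := by
    refine Continuous.ext_on Y1.dense (hf.comp hg) continuous_id ?_
    rintro _ ⟨x, rfl⟩
    simp [hgx x, hfx x]
  have hfg : g ∘ f = id := by
    refine Continuous.ext_on Y2.dense (hg.comp hf) continuous_id ?_
    rintro _ ⟨x, rfl⟩
    simp [hfx x, hgx x]
  exact ⟨{ toFun := g, invFun := f,
           left_inv := fun a => congrFun hgf a,
           right_inv := fun a => congrFun hfg a,
           continuous_toFun := hg, continuous_invFun := hf }, fun x => hgx x⟩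

end OnePointExt

/-- Completely regular is hereditary. -/
theorem aux_completelyRegular_subtype {Z : Type u} [TopologicalSpace Z] [CompletelyRegularSpace Z]
    (s : Set Z) : CompletelyRegularSpace s := by
  constructor
  intro x K hK hx
  obtain ⟨K', hK', hpre⟩ := isClosed_induced_iff.1 hK
  have hx' : (x : Z) ∉ K' := fun h => hx (by rw [← hpre]; exact h)
  obtain ⟨f, hf, hf0, hf1⟩ := CompletelyRegularSpace.completely_regular (x : Z) K' hK' hx'
  exact ⟨f ∘ Subtype.val, hf.comp continuous_subtype_val, hf0,
    fun k hk => hf1 (by rw [← hpre] at hk; exact hk)⟩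

/-- The setoid collapsing a subset `C` of `βX` to a point. -/
def thetaSetoid (C : Set (StoneCech X)) : Setoid (StoneCech X) where
  r a b := a = b ∨ (a ∈ C ∧ b ∈ C)
  iseqv := ⟨fun _ => Or.inl rfl,
    fun h => by rcases h with rfl | h; exacts [Or.inl rfl, Or.inr ⟨h.2, h.1⟩],
    fun h1 h2 => by
      rcases h1 with rfl | h1
      · exact h2
      · rcases h2 with rfl | h2
        · exact Or.inr h1
        · exact Or.inr ⟨h1.1, h2.2⟩⟩

/-- Existence of a one-point extension with given theta. -/
theorem exists_onePointExt [T35Space X] {C : Set (StoneCech X)} (hCc : IsCompact C)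
    (hne : C.Nonempty) (hdisj : C ⊆ (range (stoneCechUnit : X → StoneCech X))ᶜ) :
    ∃ Y : OnePointExt X, Y.theta = C := by
  classical
  obtain ⟨c0, hc0⟩ := hne
  have hCclosed : IsClosed C := hCc.isClosed
  set q : StoneCech X → Quotient (thetaSetoid C) := Quotient.mk (thetaSetoid C) with hq
  have hqcont : Continuous q := continuous_coinduced_rng
  have hqsurj : Function.Surjective q := fun w => Quot.exists_rep w
  have hqexact : ∀ {a b}, q a = q b → a = b ∨ (a ∈ C ∧ b ∈ C) := fun h => Quotient.exact h
  have hqsound : ∀ {a b}, a ∈ C → b ∈ C → q a = q b := fun ha hb => Quotient.sound (Or.inr ⟨ha, hb⟩)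
  have hqinj : ∀ {a b}, q a = q b → a ∉ C → a = b :=
    fun h ha => (hqexact h).resolve_right fun hh => ha hh.1
  have hunitnotC : ∀ x : X, stoneCechUnit x ∉ C := fun x hx => hdisj hx ⟨x, rfl⟩
  -- saturated open sets have open images
  have hsat : ∀ U : Set (StoneCech X), IsOpen U → (C ⊆ U ∨ C ∩ U = ∅) → IsOpen (q '' U) := by
    intro U hU hsatU
    have hpre : q ⁻¹' (q '' U) = U := by
      ext a
      constructor
      · rintro ⟨u, hu, hqu⟩
        rcases hqexact hqu with rfl | ⟨huC, haC⟩
        · exact hu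
        · rcases hsatU with hCU | hCU
          · exact hCU haC
          · exact (Set.eq_empty_iff_forall_notMem.1 hCU u ⟨huC, hu⟩).elim
      · exact fun ha => ⟨a, ha, rfl⟩
    rw [isOpen_coinduced (f := q)]
    rw [hpre]
    exact hU
  -- the quotient is Hausdorff
  haveI hT2 : T2Space (Quotient (thetaSetoid C)) := by
    constructor
    intro w1 w2 hne'
    obtain ⟨a, rfl⟩ := hqsurj w1
    obtain ⟨b, rfl⟩ := hqsurj w2
    have hab : ¬(a = b ∨ (a ∈ C ∧ b ∈ C)) := fun h => hne' (by
      rcases h with rfl | h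
      · rfl
      · exact hqsound h.1 h.2)
    push_neg at hab
    obtain ⟨hab1, hab2⟩ := hab
    -- choose closed sets around each class
    have key : ∃ U V : Set (StoneCech X), IsOpen U ∧ IsOpen V ∧ a ∈ U ∧ b ∈ V ∧
        Disjoint U V ∧ (C ⊆ U ∨ C ∩ U = ∅) ∧ (C ⊆ V ∨ C ∩ V = ∅) := by
      by_cases ha : a ∈ C
      · have hb : b ∉ C := fun hb => (hab2 ha hb).elim
        obtain ⟨U, V, hUo, hVo, hAU, hBV, hUV⟩ :=
          normal_separation hCclosed isClosed_singleton
            (Set.disjoint_singleton_right.2 hb)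
        refine ⟨U, V \ C, hUo, hVo.sdiff hCclosed, hAU ha, ⟨hBV rfl, hb⟩, ?_, Or.inl hAU, Or.inr ?_⟩
        · exact hUV.mono_right Set.diff_subset
        · ext z; simp only [mem_inter_iff, mem_diff, Set.mem_empty_iff_false, iff_false]
          rintro ⟨hz, _, hz2⟩; exact hz2 hz
      · by_cases hb : b ∈ C
        · obtain ⟨U, V, hUo, hVo, hAU, hBV, hUV⟩ :=
            normal_separation isClosed_singleton hCclosed
              (Set.disjoint_singleton_left.2 ha)
          refine ⟨U \ C, V, hUo.sdiff hCclosed, hVo, ⟨hAU rfl, ha⟩, hBV hb, ?_, Or.inr ?_,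
            Or.inl hBV⟩
          · exact hUV.mono_left Set.diff_subset
          · ext z; simp only [mem_inter_iff, mem_diff, Set.mem_empty_iff_false, iff_false]
            rintro ⟨hz, _, hz2⟩; exact hz2 hz
        · obtain ⟨U, V, hUo, hVo, hAU, hBV, hUV⟩ :=
            normal_separation isClosed_singleton isClosed_singleton
              (Set.disjoint_singleton.2 hab1)
          refine ⟨U \ C, V \ C, hUo.sdiff hCclosed, hVo.sdiff hCclosed, ⟨hAU rfl, ha⟩,
            ⟨hBV rfl, hb⟩, hUV.mono Set.diff_subset Set.diff_subset, Or.inr ?_, Or.inr ?_⟩ <;>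
          · ext z; simp only [mem_inter_iff, mem_diff, Set.mem_empty_iff_false, iff_false]
            rintro ⟨hz, _, hz2⟩; exact hz2 hz
    obtain ⟨U, V, hUo, hVo, haU, hbV, hUV, hsU, hsV⟩ := key
    refine ⟨q '' U, q '' V, hsat U hUo hsU, hsat V hVo hsV, ⟨a, haU, rfl⟩, ⟨b, hbV, rfl⟩, ?_⟩
    rw [Set.disjoint_left]
    rintro w ⟨u, hu, rfl⟩ ⟨v, hv, hqv⟩
    rcases hqexact hqv.symm with rfl | ⟨huC, hvC⟩
    · exact Set.disjoint_left.1 hUV hu hv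
    · rcases hsU with hCU | hCU
      · rcases hsV with hCV | hCV
        · exact Set.disjoint_left.1 hUV (hCU huC) (hCV huC)
        · exact (Set.eq_empty_iff_forall_notMem.1 hCV v ⟨hvC, hv⟩).elim
      · exact (Set.eq_empty_iff_forall_notMem.1 hCU u ⟨huC, hu⟩).elim
  -- the carrier
  set S : Set (Quotient (thetaSetoid C)) :=
    q '' (range (stoneCechUnit : X → StoneCech X) ∪ C) with hS
  haveI : CompletelyRegularSpace S := aux_completelyRegular_subtype S
  haveI : T35Space S := {}
  have hmemS : ∀ x : X, q (stoneCechUnit x) ∈ S := fun x => ⟨stoneCechUnit x, Or.inl ⟨x, rfl⟩, rfl⟩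
  set ι : X → S := fun x => ⟨q (stoneCechUnit x), hmemS x⟩ with hι
  set pt : S := ⟨q c0, ⟨c0, Or.inr hc0, rfl⟩⟩ with hpt
  have hιinj : Function.Injective ι := by
    intro x x' hxx
    have h1 : q (stoneCechUnit x) = q (stoneCechUnit x') := congrArg Subtype.val hxx
    exact injective_stoneCechUnit_of_t35Space (hqinj h1 (hunitnotC x))
  have hιcont : Continuous ι := (hqcont.comp continuous_stoneCechUnit).subtype_mk _
  have hιopen : IsOpenMap ι := by
    intro U hU
    obtain ⟨V, hVo, hVpre⟩ := aux_isEmbedding_stoneCechUnit.isInducing.isOpen_iff.1 hU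
    set V' := V ∩ Cᶜ with hV'
    have hV'o : IsOpen V' := hVo.inter hCclosed.isOpen_compl
    have hV'sat : C ∩ V' = ∅ := by
      ext z; simp only [mem_inter_iff, hV', mem_compl_iff, Set.mem_empty_iff_false, iff_false]
      rintro ⟨hz, _, hz2⟩; exact hz2 hz
    have hqV' : IsOpen (q '' V') := hsat V' hV'o (Or.inr hV'sat)
    have heq : ι '' U = Subtype.val ⁻¹' (q '' V') := by
      ext z
      obtain ⟨w, hw⟩ := z
      simp only [mem_image, mem_preimage, Subtype.ext_iff]
      constructor
      · rintro ⟨x, hxU, hx⟩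
        refine ⟨stoneCechUnit x, ⟨?_, hunitnotC x⟩, hx⟩
        rw [← hVpre] at hxU; exact hxU
      · rintro ⟨v, ⟨hvV, hvC⟩, hqv⟩
        obtain ⟨u, hu, hqu⟩ := hw
        have huv : v = u := hqinj (hqv.trans hqu.symm) hvC
        rcases hu with ⟨x, rfl⟩ | huC
        · refine ⟨x, ?_, hqu⟩
          rw [← hVpre]; show stoneCechUnit x ∈ V; rw [← huv]; exact hvV
        · exact absurd (huv ▸ huC) hvC
    rw [heq]
    exact hqV'.preimage continuous_subtype_val
  have hemb : Topology.IsEmbedding ι :=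
    (IsOpenEmbedding.of_continuous_injective_isOpenMap hιcont hιinj hιopen).toIsEmbedding
  have hrange_eq : range ι = {pt}ᶜ := by
    ext z
    simp only [mem_range, mem_compl_iff, mem_singleton_iff]
    constructor
    · rintro ⟨x, rfl⟩ hcon
      have h1 : q (stoneCechUnit x) = q c0 := congrArg Subtype.val hcon
      rcases hqexact h1 with heq | ⟨hmem, _⟩
      · exact hunitnotC x (heq ▸ hc0)
      · exact hunitnotC x hmem
    · intro hne'
      obtain ⟨w, hw⟩ := z
      obtain ⟨u, hu, hqu⟩ := hw
      rcases hu with ⟨x, rfl⟩ | huC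
      · exact ⟨x, Subtype.ext hqu⟩
      · exact absurd (Subtype.ext ((hqsound huC hc0).symm.trans hqu).symm) hne'
  have hdense : DenseRange ι := by
    intro z
    rw [closure_subtype]
    have hset : Subtype.val '' (range ι) = range (q ∘ (stoneCechUnit : X → StoneCech X)) := by
      ext w
      simp only [mem_image, mem_range, Function.comp_apply]
      constructor
      · rintro ⟨_, ⟨x, rfl⟩, rfl⟩; exact ⟨x, rfl⟩
      · rintro ⟨x, rfl⟩; exact ⟨ι x, ⟨x, rfl⟩, rfl⟩
    rw [hset]
    exact (hqsurj.denseRange.comp denseRange_stoneCechUnit hqcont) z.1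
  set Y : OnePointExt X :=
    { carrier := S, top := inferInstance, t35 := inferInstance, ι := ι, emb := hemb,
      pt := pt, range_eq := hrange_eq, dense := hdense } with hY
  refine ⟨Y, ?_⟩
  have hvalcont : Continuous (Subtype.val : S → Quotient (thetaSetoid C)) := continuous_subtype_val
  have hcomm : stoneCechExtend hvalcont ∘ Y.tau = q := by
    refine stoneCech_hom_ext ((continuous_stoneCechExtend hvalcont).comp Y.continuous_tau)
      hqcont (funext fun x => ?_)
    show stoneCechExtend hvalcont (Y.tau (stoneCechUnit x)) = q (stoneCechUnit x)
    rw [Y.tau_unit x, aux_extend_unit hvalcont (Y.ι x)]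
  ext p
  constructor
  · intro hp
    have h1 : Y.tau p = stoneCechUnit Y.pt := hp
    have h2 : q p = q c0 := by
      have hcp := congrFun hcomm p
      rw [Function.comp_apply, h1, aux_extend_unit hvalcont Y.pt] at hcp
      exact hcp.symm
    rcases hqexact h2 with rfl | ⟨hmem, _⟩
    · exact hc0
    · exact hmem
  · intro hp
    have h2 : q p = q c0 := hqsound hp hc0
    have h1 : stoneCechExtend hvalcont (Y.tau p) = Subtype.val Y.pt := by
      have hcp := congrFun hcomm p
      rw [Function.comp_apply] at hcp
      rw [hcp, h2]
    have h3 : Y.tau p = stoneCechUnit Y.pt :=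
      aux_fiber aux_isEmbedding_stoneCechUnit denseRange_stoneCechUnit
        Topology.IsEmbedding.subtypeVal (continuous_stoneCechExtend hvalcont)
        (aux_extend_unit hvalcont) h1
    exact h3

end Aux

/-- For a Tychonoff space `X`, the map `Θ(Y) = τ_Y⁻¹(Y \ X)` is an
anti-order-isomorphism from the set `E(X)` of (equivalence classes of) one-point Tychonoff
extensions of `X` onto the set of nonempty compact subsets of `βX \ X` ordered by inclusion:
`Θ` takes values in the nonempty compact subsets of `βX \ X`, it is surjective onto them,
it identifies exactly the equivalent extensions, and `Y₁ ≤ Y₂ ↔ Θ(Y₂) ⊆ Θ(Y₁)`. -/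
theorem stmt2 {X : Type u} [TopologicalSpace X] [T35Space X] :
    (∀ Y : OnePointExt X,
      IsCompact Y.theta ∧ Y.theta.Nonempty ∧
        Y.theta ⊆ (Set.range (stoneCechUnit : X → StoneCech X))ᶜ) ∧
    (∀ C : Set (StoneCech X),
      IsCompact C → C.Nonempty → C ⊆ (Set.range (stoneCechUnit : X → StoneCech X))ᶜ →
        ∃ Y : OnePointExt X, Y.theta = C) ∧
    (∀ Y1 Y2 : OnePointExt X, Y1.equiv Y2 ↔ Y1.theta = Y2.theta) ∧
    (∀ Y1 Y2 : OnePointExt X, Y1.le Y2 ↔ Y2.theta ⊆ Y1.theta) := by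
  refine ⟨fun Y => ⟨Y.isCompact_theta, Y.nonempty_theta, fun p hp => Y.theta_not_unit hp⟩,
    fun C hCc hne hdisj => exists_onePointExt hCc hne hdisj,
    fun Y1 Y2 => ⟨OnePointExt.equiv_imp_theta_eq, OnePointExt.theta_eq_imp_equiv⟩,
    fun Y1 Y2 => ⟨OnePointExt.le_imp_theta_subset, OnePointExt.theta_subset_imp_le⟩⟩
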